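/- For every quaternion matrix A ∈ ℍ^{M×N} there exist a unitary quaternion matrix U ∈ ℍ^{M×M}, a unitary quaternion matrix V ∈ ℍ^{N×N}, and a function σ : Fin (min M N) → ℝ that is nonincreasing and satisfies σ i ≥ 0 for every i, such that A = U * D * Vᴴ, where D ∈ ℍ^{M×N} is the rectangular diagonal matrix with D i j = (σ i : ℍ) when i and j have equal numerical index and D i j = 0 otherwise. -/

import Mathlib

noncomputable section

open Matrix

abbrev ℍ : Type := Quaternion ℝ

/-- The `M × N` rectangular diagonal quaternion matrix of `σ : Fin K → ℝ`:
entry `(i, j)` is `σ i` when `i` and `j` have equal numerical index (below `K`), else `0`. -/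
def rectDiag (M N : ℕ) {K : ℕ} (σ : Fin K → ℝ) : Matrix (Fin M) (Fin N) ℍ :=
  Matrix.of fun i j =>
    if h : (i : ℕ) = (j : ℕ) ∧ (i : ℕ) < K then ((σ ⟨i, h.2⟩ : ℝ) : ℍ) else 0

/-- A square quaternion matrix is unitary if `A * Aᴴ = Aᴴ * A = 1`. -/
def IsUnitary {n : ℕ} (A : Matrix (Fin n) (Fin n) ℍ) : Prop :=
  A * Aᴴ = 1 ∧ Aᴴ * A = 1

/-- `IsQSVD A U σ V` : `A = U * D * Vᴴ` is a quaternion singular value decomposition of `A`,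
with `U`, `V` unitary and `σ` a nonincreasing nonnegative family of singular values. -/
def IsQSVD {M N : ℕ} (A : Matrix (Fin M) (Fin N) ℍ)
    (U : Matrix (Fin M) (Fin M) ℍ) (σ : Fin (min M N) → ℝ)
    (V : Matrix (Fin N) (Fin N) ℍ) : Prop :=
  IsUnitary U ∧ IsUnitary V ∧ Antitone σ ∧ (∀ i, 0 ≤ σ i) ∧
    A = U * rectDiag M N σ * Vᴴ

/-- `A` admits a QSVD with singular values `σ`. -/
def HasQSVD {M N : ℕ} (A : Matrix (Fin M) (Fin N) ℍ) (σ : Fin (min M N) → ℝ) : Prop :=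
  ∃ U V, IsQSVD A U σ V

namespace QSVDproof

open Quaternion Finset

variable {m n p : ℕ}

/-- Sum of squared norms of a quaternion vector. -/
def n2 {n : ℕ} (x : Fin n → ℍ) : ℝ := ∑ i, normSq (x i)

lemma n2_nonneg (x : Fin n → ℍ) : 0 ≤ n2 x :=
  Finset.sum_nonneg fun _ _ => normSq_nonneg

lemma n2_eq_zero {x : Fin n → ℍ} (h : n2 x = 0) : x = 0 := by
  funext i
  have := (Finset.sum_eq_zero_iff_of_nonneg (fun i _ => (normSq_nonneg : (0:ℝ) ≤ normSq (x i)))).1 h i (mem_univ i)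
  exact normSq_eq_zero.1 this

lemma n2_zero : n2 (0 : Fin n → ℍ) = 0 := by simp [n2]

lemma re_sum {α : Type*} (s : Finset α) (f : α → ℍ) :
    (∑ i ∈ s, f i).re = ∑ i ∈ s, (f i).re :=
  map_sum (QuaternionAlgebra.reₗ (R := ℝ) (-1) 0 (-1)) f s

/-- real part of the quaternionic inner product -/
def rip {n : ℕ} (x y : Fin n → ℍ) : ℝ := (star x ⬝ᵥ y).re

lemma rip_self (x : Fin n → ℍ) : rip x x = n2 x := by
  simp only [rip, dotProduct, re_sum, n2, Pi.star_apply, star_mul_self]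
  simp

lemma rip_comm (x y : Fin n → ℍ) : rip x y = rip y x := by
  simp only [rip]
  rw [star_dotProduct]
  simp

lemma rip_add_right (x y z : Fin n → ℍ) : rip x (y + z) = rip x y + rip x z := by
  simp [rip, dotProduct_add]

lemma rip_sub_right (x y z : Fin n → ℍ) : rip x (y - z) = rip x y - rip x z := by
  simp [rip, dotProduct_sub]

lemma rip_smul_right (t : ℝ) (x y : Fin n → ℍ) : rip x (t • y) = t * rip x y := by
  simp only [rip, dotProduct_smul]
  simp

lemma n2_add (x y : Fin n → ℍ) : n2 (x + y) = n2 x + n2 y + 2 * rip x y := by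
  rw [← rip_self, ← rip_self, ← rip_self]
  have h1 : rip (x + y) (x + y) = rip (x+y) x + rip (x+y) y := rip_add_right _ _ _
  rw [h1, rip_comm (x+y) x, rip_comm (x+y) y, rip_add_right, rip_add_right,
    rip_comm y x]
  ring

lemma n2_smul (t : ℝ) (x : Fin n → ℍ) : n2 (t • x) = t ^ 2 * n2 x := by
  simp only [n2, Pi.smul_apply, normSq_smul, Finset.mul_sum]

lemma star_mulVec_dot (A : Matrix (Fin m) (Fin n) ℍ) (x : Fin n → ℍ) (y : Fin m → ℍ) :
    star (A *ᵥ x) ⬝ᵥ y = star x ⬝ᵥ (Aᴴ *ᵥ y) := by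
  rw [star_mulVec, ← dotProduct_mulVec]

/-- quadratic form `x ↦ ‖A x‖²` -/
def qf (A : Matrix (Fin m) (Fin n) ℍ) (x : Fin n → ℍ) : ℝ := n2 (A *ᵥ x)

lemma qf_nonneg (A : Matrix (Fin m) (Fin n) ℍ) (x : Fin n → ℍ) : 0 ≤ qf A x :=
  n2_nonneg _

lemma qf_smul (A : Matrix (Fin m) (Fin n) ℍ) (t : ℝ) (x : Fin n → ℍ) :
    qf A (t • x) = t ^ 2 * qf A x := by
  rw [qf, mulVec_smul, n2_smul]; rfl

lemma quad_zero {a b : ℝ} (h : ∀ t : ℝ, 0 ≤ a * t ^ 2 + b * t) : b = 0 := by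
  by_contra hb
  have hpos : (0:ℝ) < a ^ 2 + 1 := by positivity
  have h1 := h (-b / (a ^ 2 + 1))
  have hb2 : 0 < b ^ 2 := by positivity
  rw [div_pow, neg_pow] at h1
  have h2 : 0 ≤ (a * (b ^ 2 / (a ^ 2 + 1) ^ 2) + b * (-b / (a ^ 2 + 1))) * (a^2+1)^2 := by
    apply mul_nonneg _ (by positivity)
    calc (0:ℝ) ≤ a * ((-1)^2 * b ^ 2 / (a ^ 2 + 1) ^ 2) + b * (-b / (a ^ 2 + 1)) := h1
    _ = a * (b ^ 2 / (a ^ 2 + 1) ^ 2) + b * (-b / (a ^ 2 + 1)) := by ring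
  have h3 : 0 ≤ a * b ^ 2 - b ^ 2 * (a ^ 2 + 1) := by
    have e : (a * (b ^ 2 / (a ^ 2 + 1) ^ 2) + b * (-b / (a ^ 2 + 1))) * (a^2+1)^2
        = a * b ^ 2 - b ^ 2 * (a ^ 2 + 1) := by
      field_simp
      ring
    linarith [e ▸ h2]
  nlinarith [sq_nonneg (2*a - 1)]


lemma continuous_n2 : Continuous (n2 : (Fin n → ℍ) → ℝ) :=
  continuous_finset_sum _ fun i _ => continuous_normSq.comp (continuous_apply i)

lemma continuous_qf (A : Matrix (Fin m) (Fin n) ℍ) : Continuous (qf A) := by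
  have hA : Continuous fun x : Fin n → ℍ => A *ᵥ x := by
    refine continuous_pi fun i => ?_
    simpa [mulVec, dotProduct] using
      continuous_finset_sum (f := fun j (x : Fin n → ℍ) => A i j * x j) univ
        fun j _ => continuous_const.mul (continuous_apply j)
  exact continuous_n2.comp hA

lemma n2_single_one (j : Fin (n+1)) : n2 (Pi.single j 1 : Fin (n+1) → ℍ) = 1 := by
  have h : ∀ i, normSq ((Pi.single j (1:ℍ) : Fin (n+1) → ℍ) i) = if i = j then 1 else 0 := by
    intro i
    rcases eq_or_ne i j with rfl | h
    · simp
    · simp [Pi.single_apply, h]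
  simp only [n2, h]
  simp

lemma exists_eigen {M N : ℕ} (A : Matrix (Fin M) (Fin (N+1)) ℍ) :
    ∃ (v : Fin (N+1) → ℍ) (lam : ℝ), n2 v = 1 ∧ lam = qf A v ∧
      (∀ x, qf A x ≤ lam * n2 x) ∧ (Aᴴ * A) *ᵥ v = lam • v := by
  -- compactness: maximize qf A on the sphere
  have hball : IsCompact (Metric.closedBall (0 : Fin (N+1) → ℍ) 1) :=
    isCompact_closedBall _ _
  have hsub : {x : Fin (N+1) → ℍ | n2 x = 1} ⊆ Metric.closedBall 0 1 := by
    intro x hx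
    rw [Metric.mem_closedBall, dist_zero_right]
    refine (pi_norm_le_iff_of_nonneg zero_le_one).2 fun i => ?_
    have h1 : normSq (x i) ≤ 1 := by
      have := Finset.single_le_sum (f := fun i => normSq (x i))
        (fun i _ => normSq_nonneg) (mem_univ i)
      rw [show ∑ i, normSq (x i) = n2 x from rfl, hx] at this
      exact this
    rw [normSq_eq_norm_mul_self] at h1
    nlinarith [norm_nonneg (x i)]
  have hcl : IsClosed {x : Fin (N+1) → ℍ | n2 x = 1} :=
    isClosed_singleton.preimage continuous_n2
  have hcpt : IsCompact {x : Fin (N+1) → ℍ | n2 x = 1} :=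
    hball.of_isClosed_subset hcl hsub
  have hne : (Pi.single 0 1 : Fin (N+1) → ℍ) ∈ {x : Fin (N+1) → ℍ | n2 x = 1} :=
    n2_single_one 0
  obtain ⟨v, hv, hmaxOn⟩ := hcpt.exists_isMaxOn ⟨_, hne⟩ (continuous_qf A).continuousOn
  have hv1 : n2 v = 1 := hv
  set lam := qf A v with hlam
  have hmax : ∀ x, n2 x = 1 → qf A x ≤ lam := fun x hx => hmaxOn hx
  have hlam0 : 0 ≤ lam := qf_nonneg A v
  -- global bound by homogeneity
  have hglobal : ∀ x, qf A x ≤ lam * n2 x := by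
    intro x
    rcases eq_or_ne x 0 with rfl | hx
    · rw [qf, mulVec_zero, n2_zero, n2_zero, mul_zero]
    · have hn2 : 0 < n2 x := by
        rcases (n2_nonneg x).lt_or_eq with h | h
        · exact h
        · exact absurd (n2_eq_zero h.symm) hx
      set r := Real.sqrt (n2 x) with hr
      have hr0 : 0 < r := Real.sqrt_pos.2 hn2
      have hr2 : r ^ 2 = n2 x := Real.sq_sqrt hn2.le
      have hy : n2 (r⁻¹ • x) = 1 := by
        rw [n2_smul, ← hr2]
        field_simp
      have := hmax _ hy
      rw [qf_smul] at this
      have h2 : qf A x ≤ lam * r ^ 2 := by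
        rw [inv_pow] at this
        calc qf A x = r ^ 2 * ((r ^ 2)⁻¹ * qf A x) := by field_simp
        _ ≤ r ^ 2 * lam := by
            apply mul_le_mul_of_nonneg_left this (by positivity)
        _ = lam * r ^ 2 := mul_comm _ _
      rwa [hr2] at h2
  refine ⟨v, lam, hv1, rfl, hglobal, ?_⟩
  -- first-order condition
  have key : ∀ w : Fin (N+1) → ℍ, rip w ((Aᴴ * A) *ᵥ v - lam • v) = 0 := by
    intro w
    have hquad : ∀ t : ℝ, 0 ≤ (lam * n2 w - n2 (A *ᵥ w)) * t ^ 2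
        + (2 * (lam * rip v w - rip (A *ᵥ v) (A *ᵥ w))) * t := by
      intro t
      have h := hglobal (v + t • w)
      have hL : qf A (v + t • w)
          = lam + t ^ 2 * n2 (A *ᵥ w) + 2 * (t * rip (A *ᵥ v) (A *ᵥ w)) := by
        rw [qf, mulVec_add, mulVec_smul, n2_add, rip_smul_right, n2_smul]
        rw [show n2 (A *ᵥ v) = lam from rfl]
      have hR : n2 (v + t • w) = 1 + t ^ 2 * n2 w + 2 * (t * rip v w) := by
        rw [n2_add, rip_smul_right, n2_smul, hv1]
      rw [hL, hR] at h
      nlinarith [h]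
    have hb := quad_zero hquad
    have hb' : rip (A *ᵥ v) (A *ᵥ w) = lam * rip v w := by linarith
    -- convert to rip w (Bv - lam v)
    have h1 : rip (A *ᵥ v) (A *ᵥ w) = rip w ((Aᴴ * A) *ᵥ v) := by
      rw [rip_comm, rip, star_mulVec_dot, mulVec_mulVec, rip]
    have h2 : lam * rip v w = rip w (lam • v) := by
      rw [rip_smul_right, rip_comm]
    rw [rip_sub_right, ← h1, ← h2, hb', sub_self]
  have := key ((Aᴴ * A) *ᵥ v - lam • v)
  rw [rip_self] at this
  have h0 := n2_eq_zero this
  exact sub_eq_zero.1 h0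

lemma IsUnitary.mul {A B : Matrix (Fin n) (Fin n) ℍ} (hA : IsUnitary A)
    (hB : IsUnitary B) : IsUnitary (A * B) := by
  constructor
  · rw [conjTranspose_mul, Matrix.mul_assoc, ← Matrix.mul_assoc B Bᴴ, hB.1,
      Matrix.one_mul, hA.1]
  · rw [conjTranspose_mul, Matrix.mul_assoc, ← Matrix.mul_assoc Aᴴ A, hA.2,
      Matrix.one_mul, hB.2]

lemma IsUnitary.one : IsUnitary (1 : Matrix (Fin n) (Fin n) ℍ) := by
  constructor <;> simp

/-- outer product `u uᴴ` -/
def outer (u : Fin n → ℍ) : Matrix (Fin n) (Fin n) ℍ :=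
  Matrix.of fun i j => u i * star (u j)

lemma outer_conjTranspose (u : Fin n → ℍ) : (outer u)ᴴ = outer u := by
  refine Matrix.ext fun i j => ?_
  simp [outer, conjTranspose_apply, StarMul.star_mul]

lemma outer_mul_outer (u : Fin n → ℍ) : outer u * outer u = n2 u • outer u := by
  refine Matrix.ext fun i j => ?_
  simp only [mul_apply, outer, of_apply, Matrix.smul_apply]
  have h : ∀ k, u i * star (u k) * (u k * star (u j))
      = normSq (u k) • (u i * star (u j)) := by
    intro k
    rw [mul_assoc (u i), ← mul_assoc (star (u k)), star_mul_self, ← mul_assoc,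
      mul_coe_eq_smul, ← smul_mul_assoc]
  rw [Finset.sum_congr rfl fun k _ => h k, ← Finset.sum_smul]
  rfl

lemma householder_unitary (u : Fin n → ℍ) (hu : n2 u ≠ 0) :
    IsUnitary (1 - (2 / n2 u) • outer u) := by
  have hsa : (1 - (2 / n2 u) • outer u)ᴴ = 1 - (2 / n2 u) • outer u := by
    refine Matrix.ext fun i j => ?_
    simp only [conjTranspose_apply, Matrix.sub_apply, Matrix.smul_apply, star_sub,
      Quaternion.star_smul, one_apply, outer, of_apply, StarMul.star_mul, star_star]
    rcases eq_or_ne i j with rfl | h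
    · simp [StarMul.star_mul]
    · simp [if_neg h, if_neg (Ne.symm h), StarMul.star_mul]
  have hsq : (1 - (2 / n2 u) • outer u) * (1 - (2 / n2 u) • outer u) = 1 := by
    rw [Matrix.mul_sub, Matrix.mul_one, Matrix.sub_mul, Matrix.one_mul,
      Matrix.smul_mul, Matrix.mul_smul, outer_mul_outer, smul_smul, smul_smul]
    have : 2 / n2 u * (2 / n2 u) * n2 u = 2 / n2 u + 2 / n2 u := by
      field_simp
      ring
    rw [this, add_smul]
    abel
  exact ⟨by rw [hsa]; exact hsq, by rw [hsa]; exact hsq⟩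

lemma n2_mul_unit (v : Fin n → ℍ) (d : ℍ) (hd : normSq d = 1) :
    n2 (fun i => v i * d) = n2 v := by
  simp [n2, _root_.map_mul, hd]

lemma diag_unitary (f : Fin n → ℍ) (hf : ∀ i, normSq (f i) = 1) :
    IsUnitary (Matrix.diagonal f) := by
  have h1 : ∀ i, f i * star (f i) = 1 := fun i => by
    rw [self_mul_star, hf i]; simp
  have h2 : ∀ i, star (f i) * f i = 1 := fun i => by
    rw [star_mul_self, hf i]; simp
  constructor
  · rw [diagonal_conjTranspose, diagonal_mul_diagonal]
    refine Matrix.ext fun i j => ?_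
    rcases eq_or_ne i j with rfl | h
    · simp [diagonal_apply_eq, h1 i]
    · simp [diagonal_apply_ne _ h, one_apply_ne h]
  · rw [diagonal_conjTranspose, diagonal_mul_diagonal]
    refine Matrix.ext fun i j => ?_
    rcases eq_or_ne i j with rfl | h
    · simp [diagonal_apply_eq, h2 i]
    · simp [diagonal_apply_ne _ h, one_apply_ne h]

/-- every unit vector is the first column of some unitary matrix -/
lemma exists_unitary_col {k : ℕ} (v : Fin (k+1) → ℍ) (hv : n2 v = 1) :
    ∃ U : Matrix (Fin (k+1)) (Fin (k+1)) ℍ, IsUnitary U ∧ ∀ i, U i 0 = v i := by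
  classical
  set α := v 0 with hα
  set ρ := Real.sqrt (normSq α) with hρ
  have hρ0 : 0 ≤ ρ := Real.sqrt_nonneg _
  have hρ2 : ρ ^ 2 = normSq α := Real.sq_sqrt normSq_nonneg
  set d : ℍ := if α = 0 then 1 else star α * ((ρ⁻¹ : ℝ) : ℍ) with hd_def
  have hd : normSq d = 1 := by
    rw [hd_def]
    split_ifs with h
    · simp
    · have hα0 : normSq α ≠ 0 := normSq_ne_zero.2 h
      have hρne : ρ ≠ 0 := by
        rw [hρ]
        exact Real.sqrt_ne_zero'.2 (lt_of_le_of_ne normSq_nonneg (Ne.symm hα0))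
      rw [_root_.map_mul, normSq_star, normSq_coe, ← hρ2]
      field_simp
  have hαd : α * d = ((ρ : ℝ) : ℍ) := by
    rw [hd_def]
    split_ifs with h
    · rw [h, zero_mul]
      rw [hρ, h]
      simp
    · have hα0 : normSq α ≠ 0 := normSq_ne_zero.2 h
      have hρne : ρ ≠ 0 := by
        rw [hρ]
        exact Real.sqrt_ne_zero'.2 (lt_of_le_of_ne normSq_nonneg (Ne.symm hα0))
      rw [← mul_assoc, self_mul_star, ← Quaternion.coe_mul]
      congr 1
      rw [← hρ2]
      field_simp
  set v' : Fin (k+1) → ℍ := fun i => v i * d with hv'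
  have hv'1 : n2 v' = 1 := by rw [hv']; rw [n2_mul_unit v d hd, hv]
  have hv'0 : v' 0 = ((ρ : ℝ) : ℍ) := hαd
  have hρle : ρ ≤ 1 := by
    have h1 : normSq α ≤ n2 v := by
      have := Finset.single_le_sum (f := fun i => normSq (v i))
        (fun i _ => normSq_nonneg) (mem_univ 0)
      exact this
    rw [hv] at h1
    calc ρ = Real.sqrt (normSq α) := hρ
    _ ≤ Real.sqrt 1 := Real.sqrt_le_sqrt h1
    _ = 1 := Real.sqrt_one
  -- value of the tail sum
  have htail : ∑ i : Fin k, normSq (v' i.succ) = 1 - ρ ^ 2 := by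
    have := hv'1
    rw [n2, Fin.sum_univ_succ, hv'0, normSq_coe] at this
    linarith
  rcases eq_or_lt_of_le hρle with hρ1 | hρlt
  · -- ρ = 1 : v is e₀ times a unit
    have htail0 : ∀ i : Fin k, v' i.succ = 0 := by
      intro i
      have hsum : ∑ i : Fin k, normSq (v' i.succ) = 0 := by rw [htail, hρ1]; norm_num
      have := (Finset.sum_eq_zero_iff_of_nonneg
        (fun i _ => (normSq_nonneg : (0:ℝ) ≤ normSq (v' i.succ)))).1 hsum i (mem_univ i)
      exact normSq_eq_zero.1 this
    have hvsucc : ∀ i : Fin k, v i.succ = 0 := by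
      intro i
      have h := htail0 i
      rw [hv'] at h
      have hd0 : d ≠ 0 := by
        intro h0
        rw [h0] at hd
        simp at hd
      exact (mul_eq_zero.1 h).resolve_right hd0
    have hαnz : normSq α = 1 := by rw [← hρ2, hρ1]; norm_num
    refine ⟨Matrix.diagonal (fun i => if i = 0 then α else 1),
      diag_unitary _ (fun i => by split_ifs <;> simp [hαnz]), ?_⟩
    · intro i
      rcases Fin.eq_zero_or_eq_succ i with rfl | ⟨j, rfl⟩
      · simp [diagonal_apply, hα]
      · rw [diagonal_apply_ne _ (Fin.succ_ne_zero j), hvsucc j]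
  · -- ρ < 1 : Householder
    set u : Fin (k+1) → ℍ := v' - Pi.single 0 1 with hu_def
    have hu0 : u 0 = (((ρ - 1 : ℝ)) : ℍ) := by
      have h1 : u 0 = v' 0 - 1 := by
        rw [hu_def]
        simp
      rw [h1, hv'0]
      push_cast
      ring
    have husucc : ∀ i : Fin k, u i.succ = v' i.succ := by
      intro i
      rw [hu_def]
      simp [Pi.single_apply, Fin.succ_ne_zero i]
    have hn2u : n2 u = 2 * (1 - ρ) := by
      rw [n2, Fin.sum_univ_succ, hu0, normSq_coe]
      rw [Finset.sum_congr rfl fun i _ => by rw [husucc i], htail]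
      ring
    have hn2u0 : n2 u ≠ 0 := by
      rw [hn2u]
      intro h
      have : ρ = 1 := by linarith
      exact absurd this hρlt.ne
    set c : ℝ := 2 / n2 u with hc
    set H := (1 : Matrix (Fin (k+1)) (Fin (k+1)) ℍ) - c • outer u with hH
    have hHu : IsUnitary H := householder_unitary u hn2u0
    have hHcol : ∀ i, H i 0 = v' i := by
      intro i
      have hstar : star (u 0) = (((ρ - 1 : ℝ)) : ℍ) := by rw [hu0, star_coe]
      have : H i 0 = (1 : Matrix (Fin (k+1)) (Fin (k+1)) ℍ) i 0
          - c • (u i * (((ρ - 1 : ℝ)) : ℍ)) := by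
        rw [hH]
        simp [outer, hstar]
      rw [this, mul_coe_eq_smul, smul_smul]
      have hcval : c * (ρ - 1) = -1 := by
        have hne : (1:ℝ) - ρ ≠ 0 := ne_of_gt (by linarith)
        rw [hc, hn2u]
        field_simp
        linarith [sq_nonneg ρ]
      rw [hcval]
      have hsing : (1 : Matrix (Fin (k+1)) (Fin (k+1)) ℍ) i 0
          = (Pi.single (0 : Fin (k+1)) (1:ℍ) : Fin (k+1) → ℍ) i := by
        rcases eq_or_ne i 0 with rfl | h
        · simp
        · simp [one_apply_ne h, Pi.single_apply, h]
      rw [hsing, neg_one_smul]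
      rw [hu_def]
      simp
    -- multiply by diag(star d, 1, ...) on the right
    set D := Matrix.diagonal (fun j : Fin (k+1) => if j = 0 then star d else 1) with hD
    have hDu : IsUnitary D := by
      refine diag_unitary _ (fun i => ?_)
      split_ifs <;> simp [hd]
    refine ⟨H * D, IsUnitary.mul hHu hDu, fun i => ?_⟩
    rw [hD, mul_diagonal]
    simp only [if_pos rfl]
    rw [hHcol i]
    show (v i * d) * star d = v i
    rw [mul_assoc, self_mul_star, hd]
    simp

/-! ### block machinery -/

/-- `ℕ`-indexed rectangular diagonal matrix -/
def rd (M N : ℕ) (σ : ℕ → ℝ) : Matrix (Fin M) (Fin N) ℍ :=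
  Matrix.of fun i j => if (i : ℕ) = (j : ℕ) then ((σ i : ℝ) : ℍ) else 0

/-- `1 ⊕ B` style block matrix with scalar top-left corner -/
def oneBlock (c : ℍ) (B : Matrix (Fin m) (Fin n) ℍ) : Matrix (Fin (m+1)) (Fin (n+1)) ℍ :=
  Matrix.of fun i j =>
    Fin.cases (Fin.cases c (fun _ => 0) j) (fun i' => Fin.cases 0 (fun j' => B i' j') j) i

@[simp] lemma oneBlock_00 (c : ℍ) (B : Matrix (Fin m) (Fin n) ℍ) :
    oneBlock c B 0 0 = c := rfl

@[simp] lemma oneBlock_0succ (c : ℍ) (B : Matrix (Fin m) (Fin n) ℍ) (j : Fin n) :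
    oneBlock c B 0 j.succ = 0 := by simp [oneBlock]

@[simp] lemma oneBlock_succ0 (c : ℍ) (B : Matrix (Fin m) (Fin n) ℍ) (i : Fin m) :
    oneBlock c B i.succ 0 = 0 := by simp [oneBlock]

@[simp] lemma oneBlock_succsucc (c : ℍ) (B : Matrix (Fin m) (Fin n) ℍ) (i : Fin m) (j : Fin n) :
    oneBlock c B i.succ j.succ = B i j := by simp [oneBlock]

lemma oneBlock_mul (c d : ℍ) (B : Matrix (Fin m) (Fin n) ℍ) (C : Matrix (Fin n) (Fin p) ℍ) :
    oneBlock c B * oneBlock d C = oneBlock (c * d) (B * C) := by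
  refine Matrix.ext fun i j => ?_
  rw [mul_apply, Fin.sum_univ_succ]
  refine Fin.cases ?_ (fun i' => ?_) i <;> refine Fin.cases ?_ (fun j' => ?_) j <;>
    simp [mul_apply]

lemma oneBlock_conjTranspose (c : ℍ) (B : Matrix (Fin m) (Fin n) ℍ) :
    (oneBlock c B)ᴴ = oneBlock (star c) Bᴴ := by
  refine Matrix.ext fun i j => ?_
  rw [conjTranspose_apply]
  refine Fin.cases ?_ (fun i' => ?_) i <;> refine Fin.cases ?_ (fun j' => ?_) j <;>
    simp [conjTranspose_apply]

lemma oneBlock_one : oneBlock 1 (1 : Matrix (Fin m) (Fin m) ℍ) = 1 := by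
  refine Matrix.ext fun i j => ?_
  refine Fin.cases ?_ (fun i' => ?_) i <;> refine Fin.cases ?_ (fun j' => ?_) j
  · simp
  · simp [one_apply, (Fin.succ_ne_zero _).symm]
  · simp [one_apply, Fin.succ_ne_zero]
  · rcases eq_or_ne i' j' with rfl | h
    · simp
    · simp [one_apply, h, fun h' => h (Fin.succ_injective _ h')]

lemma oneBlock_unitary {U : Matrix (Fin m) (Fin m) ℍ} (hU : IsUnitary U) :
    IsUnitary (oneBlock 1 U) := by
  constructor
  · rw [oneBlock_conjTranspose, oneBlock_mul, hU.1, star_one, mul_one, oneBlock_one]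
  · rw [oneBlock_conjTranspose, oneBlock_mul, hU.2, star_one, one_mul, oneBlock_one]

lemma oneBlock_mulVec (c : ℍ) (B : Matrix (Fin m) (Fin n) ℍ) (a : ℍ) (x : Fin n → ℍ) :
    oneBlock c B *ᵥ Fin.cons a x = Fin.cons (c * a) (B *ᵥ x) := by
  funext i
  rw [mulVec, dotProduct, Fin.sum_univ_succ]
  refine Fin.cases ?_ (fun i' => ?_) i <;> simp [mulVec, dotProduct]

lemma rd_succ (M N : ℕ) (σ : ℕ → ℝ) :
    rd (M+1) (N+1) σ = oneBlock ((σ 0 : ℝ) : ℍ) (rd M N (fun k => σ (k+1))) := by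
  refine Matrix.ext fun i j => ?_
  refine Fin.cases ?_ (fun i' => ?_) i <;> refine Fin.cases ?_ (fun j' => ?_) j
  · simp [rd]
  · simp [rd, Fin.val_succ]
  · simp [rd, Fin.val_succ]
  · simp [rd, Fin.val_succ]

lemma n2_cons (a : ℍ) (x : Fin n → ℍ) : n2 (Fin.cons a x) = normSq a + n2 x := by
  rw [n2, Fin.sum_univ_succ]
  simp [n2]

lemma n2_mulVec_unitary {U : Matrix (Fin n) (Fin n) ℍ} (hU : Uᴴ * U = 1) (x : Fin n → ℍ) :
    n2 (U *ᵥ x) = n2 x := by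
  rw [← rip_self, ← rip_self]
  rw [rip, star_mulVec_dot, mulVec_mulVec, hU, one_mulVec, rip]

/-! ### the main induction -/

lemma zero_case {M N : ℕ} (c : ℝ) (hc : 0 ≤ c) :
    ∃ (U : Matrix (Fin M) (Fin M) ℍ) (V : Matrix (Fin N) (Fin N) ℍ) (σ : ℕ → ℝ),
      IsUnitary U ∧ IsUnitary V ∧ (∀ k, σ (k+1) ≤ σ k) ∧ (∀ k, 0 ≤ σ k) ∧ σ 0 ≤ c ∧
      (0 : Matrix (Fin M) (Fin N) ℍ) = U * rd M N σ * Vᴴ := by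
  refine ⟨1, 1, fun _ => 0, IsUnitary.one, IsUnitary.one,
    fun k => le_rfl, fun k => le_rfl, hc, ?_⟩
  have : rd M N (fun _ => 0) = 0 := by
    refine Matrix.ext fun i j => ?_
    simp [rd]
  rw [this, conjTranspose_one, Matrix.mul_zero, Matrix.zero_mul]

lemma aux : ∀ (n M N : ℕ), M + N ≤ n → ∀ (A : Matrix (Fin M) (Fin N) ℍ) (c : ℝ), 0 ≤ c →
    (∀ x, qf A x ≤ c ^ 2 * n2 x) →
    ∃ (U : Matrix (Fin M) (Fin M) ℍ) (V : Matrix (Fin N) (Fin N) ℍ) (σ : ℕ → ℝ),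
      IsUnitary U ∧ IsUnitary V ∧ (∀ k, σ (k+1) ≤ σ k) ∧ (∀ k, 0 ≤ σ k) ∧ σ 0 ≤ c ∧
      A = U * rd M N σ * Vᴴ := by
  intro n
  induction n with
  | zero =>
    intro M N hMN A c hc _
    have hM : M = 0 := by omega
    subst hM
    have hA : A = 0 := by
      refine Matrix.ext fun i j => i.elim0
    rw [hA]
    exact zero_case c hc
  | succ n ih =>
    intro M N hMN A c hc hbound
    by_cases hA : A = 0
    · rw [hA]; exact zero_case c hc
    -- A ≠ 0, so M and N are positive
    rcases M with _ | M'
    · exact absurd (Matrix.ext fun i j => i.elim0) hA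
    rcases N with _ | N'
    · exact absurd (Matrix.ext fun i j => j.elim0) hA
    obtain ⟨v, lam, hv1, hlamdef, hglobal, heig⟩ := exists_eigen A
    -- lam > 0
    have hlam_pos : 0 < lam := by
      obtain ⟨i0, j0, hij⟩ : ∃ i j, A i j ≠ 0 := by
        by_contra h
        push_neg at h
        exact hA (Matrix.ext fun i j => h i j)
      have h1 : qf A (Pi.single j0 1) ≤ lam * n2 (Pi.single j0 1) := hglobal _
      have h2 : 0 < qf A (Pi.single j0 1) := by
        rw [qf, mulVec_single]
        have : (0:ℝ) < ∑ i, normSq (A i j0 * 1) := by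
          refine Finset.sum_pos' (fun i _ => normSq_nonneg) ⟨i0, mem_univ i0, ?_⟩
          rw [mul_one]
          exact lt_of_le_of_ne normSq_nonneg (Ne.symm (normSq_ne_zero.2 hij))
        exact this
      nlinarith [n2_nonneg (Pi.single j0 (1:ℍ) : Fin (N'+1) → ℍ)]
    set s := Real.sqrt lam with hs_def
    have hs_pos : 0 < s := Real.sqrt_pos.2 hlam_pos
    have hs2 : s ^ 2 = lam := Real.sq_sqrt hlam_pos.le
    set u : Fin (M'+1) → ℍ := s⁻¹ • (A *ᵥ v) with hu_def
    have hu1 : n2 u = 1 := by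
      rw [hu_def, n2_smul]
      rw [show n2 (A *ᵥ v) = qf A v from rfl, ← hlamdef, ← hs2]
      field_simp
    have hAv : A *ᵥ v = s • u := by
      rw [hu_def, smul_smul]
      rw [mul_inv_cancel₀ hs_pos.ne', one_smul]
    have hATu : Aᴴ *ᵥ u = s • v := by
      rw [hu_def, mulVec_smul, mulVec_mulVec, heig, smul_smul]
      rw [show s⁻¹ * lam = s by rw [← hs2]; field_simp]
    obtain ⟨U₁, hU₁, hU₁col⟩ := exists_unitary_col u hu1
    obtain ⟨V₁, hV₁, hV₁col⟩ := exists_unitary_col v hv1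
    set C := U₁ᴴ * A * V₁ with hC_def
    -- entries of C as inner products
    have hentry : ∀ i j, C i j = (star fun k => U₁ k i) ⬝ᵥ (A *ᵥ fun l => V₁ l j) := by
      intro i j
      rw [hC_def]
      simp only [mul_apply, conjTranspose_apply, dotProduct, mulVec, Pi.star_apply,
        Finset.sum_mul, Finset.mul_sum]
      rw [Finset.sum_comm]
      exact Finset.sum_congr rfl fun k _ => Finset.sum_congr rfl fun l _ => mul_assoc _ _ _
    have hCcol : ∀ i, C i 0 = if i = 0 then ((s:ℝ):ℍ) else 0 := by
      intro i
      rw [hentry i 0, show (fun l => V₁ l 0) = v from funext hV₁col, hAv,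
        dotProduct_smul]
      have h3 : (star fun k => U₁ k i) ⬝ᵥ u = (U₁ᴴ * U₁) i 0 := by
        simp only [mul_apply, conjTranspose_apply, dotProduct, Pi.star_apply]
        exact Finset.sum_congr rfl fun k _ => by rw [hU₁col k]
      rw [h3, hU₁.2]
      rcases eq_or_ne i 0 with rfl | h
      · rw [one_apply_eq, if_pos rfl, ← coe_mul_eq_smul, mul_one]
      · rw [one_apply_ne h, if_neg h, smul_zero]
    have hCrow : ∀ j, C 0 j = if j = 0 then ((s:ℝ):ℍ) else 0 := by
      intro j
      rw [hentry 0 j, show (fun k => U₁ k 0) = u from funext hU₁col,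
        show A = (Aᴴ)ᴴ from (conjTranspose_conjTranspose A).symm,
        ← star_mulVec_dot Aᴴ u, hATu,
        show star ((s:ℝ) • v) = (s:ℝ) • star v from funext fun l => Quaternion.star_smul _ _,
        smul_dotProduct]
      have h3 : star v ⬝ᵥ (fun l => V₁ l j) = (V₁ᴴ * V₁) 0 j := by
        simp only [mul_apply, conjTranspose_apply, dotProduct, Pi.star_apply]
        exact Finset.sum_congr rfl fun k _ => by rw [hV₁col k]
      rw [h3, hV₁.2]
      rcases eq_or_ne j 0 with rfl | h
      · rw [one_apply_eq, if_pos rfl, ← coe_mul_eq_smul, mul_one]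
      · rw [one_apply_ne (Ne.symm h), if_neg h, smul_zero]
    set A' : Matrix (Fin M') (Fin N') ℍ := Matrix.of fun i j => C i.succ j.succ with hA'_def
    have hCblock : C = oneBlock ((s:ℝ):ℍ) A' := by
      refine Matrix.ext fun i j => ?_
      refine Fin.cases ?_ (fun i' => ?_) i <;> refine Fin.cases ?_ (fun j' => ?_) j
      · rw [hCrow 0, if_pos rfl, oneBlock_00]
      · rw [hCrow _, if_neg (Fin.succ_ne_zero _), oneBlock_0succ]
      · rw [hCcol _, if_neg (Fin.succ_ne_zero _), oneBlock_succ0]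
      · rw [oneBlock_succsucc]
        rfl
    have hArec : A = U₁ * C * V₁ᴴ := by
      rw [hC_def]
      have : U₁ * (U₁ᴴ * A * V₁) * V₁ᴴ = (U₁ * U₁ᴴ) * A * (V₁ * V₁ᴴ) := by
        simp only [Matrix.mul_assoc]
      rw [this, hU₁.1, hV₁.1, Matrix.one_mul, Matrix.mul_one]
    -- bound for A'
    have hbound' : ∀ x, qf A' x ≤ s ^ 2 * n2 x := by
      intro x
      have h1 : qf A' x = n2 (C *ᵥ Fin.cons 0 x) := by
        rw [hCblock, oneBlock_mulVec, mul_zero, n2_cons]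
        simp [qf]
      have h2 : C *ᵥ Fin.cons 0 x = U₁ᴴ *ᵥ (A *ᵥ (V₁ *ᵥ Fin.cons 0 x)) := by
        rw [hC_def, ← mulVec_mulVec, ← mulVec_mulVec]
      have h3 : n2 (U₁ᴴ *ᵥ (A *ᵥ (V₁ *ᵥ Fin.cons 0 x)))
          = n2 (A *ᵥ (V₁ *ᵥ Fin.cons 0 x)) := by
        refine n2_mulVec_unitary ?_ _
        rw [conjTranspose_conjTranspose, hU₁.1]
      have h4 : qf A (V₁ *ᵥ Fin.cons 0 x) ≤ lam * n2 (V₁ *ᵥ Fin.cons 0 x) := hglobal _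
      have h5 : n2 (V₁ *ᵥ Fin.cons 0 x) = n2 x := by
        rw [n2_mulVec_unitary hV₁.2, n2_cons]
        simp
      rw [h1, h2, h3]
      rw [show n2 (A *ᵥ (V₁ *ᵥ Fin.cons 0 x)) = qf A (V₁ *ᵥ Fin.cons 0 x) from rfl]
      rw [hs2]
      calc qf A (V₁ *ᵥ Fin.cons 0 x) ≤ lam * n2 (V₁ *ᵥ Fin.cons 0 x) := h4
      _ = lam * n2 x := by rw [h5]
    -- apply induction hypothesis
    obtain ⟨U', V', σ', hU', hV', hσ'dec, hσ'0, hσ'top, hA'eq⟩ :=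
      ih M' N' (by omega) A' s hs_pos.le hbound'
    refine ⟨U₁ * oneBlock 1 U', V₁ * oneBlock 1 V',
      fun k => Nat.casesOn k s (fun k' => σ' k'), IsUnitary.mul hU₁ (oneBlock_unitary hU'),
      IsUnitary.mul hV₁ (oneBlock_unitary hV'), ?_, ?_, ?_, ?_⟩
    · intro k
      cases k with
      | zero => exact hσ'top
      | succ k' => exact hσ'dec k'
    · intro k
      cases k with
      | zero => exact hs_pos.le
      | succ k' => exact hσ'0 k'
    · show s ≤ c
      have h1 : lam ≤ c ^ 2 := by
        have := hbound v
        rw [← hlamdef, hv1, mul_one] at this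
        exact this
      calc s = Real.sqrt lam := hs_def
      _ ≤ Real.sqrt (c ^ 2) := Real.sqrt_le_sqrt h1
      _ = c := by rw [Real.sqrt_sq hc]
    · -- the equation
      have hgen : ∀ σ₀ : ℕ → ℝ, σ₀ 0 = s → (fun k => σ₀ (k+1)) = σ' →
          A = (U₁ * oneBlock 1 U') * rd (M'+1) (N'+1) σ₀ * (V₁ * oneBlock 1 V')ᴴ := by
        intro σ₀ h0 hsucc
        rw [rd_succ, hsucc, h0]
        rw [conjTranspose_mul, oneBlock_conjTranspose, star_one]
        have expand : (U₁ * oneBlock 1 U') * oneBlock (((s:ℝ)):ℍ) (rd M' N' σ')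
            * (oneBlock 1 V'ᴴ * V₁ᴴ)
            = U₁ * (oneBlock 1 U' * oneBlock (((s:ℝ)):ℍ) (rd M' N' σ') * oneBlock 1 V'ᴴ) * V₁ᴴ := by
          simp only [Matrix.mul_assoc]
        rw [expand, oneBlock_mul, oneBlock_mul, one_mul, mul_one]
        rw [← hA'eq, ← hCblock]
        exact hArec
      exact hgen _ rfl rfl

lemma crude_bound {M N : ℕ} (A : Matrix (Fin M) (Fin N) ℍ) (x : Fin N → ℍ) :
    qf A x ≤ (Real.sqrt (∑ i, ∑ j, normSq (A i j))) ^ 2 * n2 x := by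
  have hT0 : (0:ℝ) ≤ ∑ i, ∑ j, normSq (A i j) :=
    Finset.sum_nonneg fun i _ => Finset.sum_nonneg fun j _ => normSq_nonneg
  rw [Real.sq_sqrt hT0]
  have hterm : ∀ i, normSq ((A *ᵥ x) i) ≤ (∑ j, normSq (A i j)) * n2 x := by
    intro i
    have h1 : ‖(A *ᵥ x) i‖ ≤ ∑ j, ‖A i j‖ * ‖x j‖ := by
      rw [mulVec, dotProduct]
      refine (norm_sum_le _ _).trans ?_
      exact le_of_eq (Finset.sum_congr rfl fun j _ => norm_mul _ _)
    have h2 : (∑ j, ‖A i j‖ * ‖x j‖) ^ 2 ≤ (∑ j, ‖A i j‖ ^ 2) * (∑ j, ‖x j‖ ^ 2) :=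
      Finset.sum_mul_sq_le_sq_mul_sq _ _ _
    have h3 : normSq ((A *ᵥ x) i) = ‖(A *ᵥ x) i‖ ^ 2 := by
      rw [normSq_eq_norm_mul_self, sq]
    have h4 : ‖(A *ᵥ x) i‖ ^ 2 ≤ (∑ j, ‖A i j‖ * ‖x j‖) ^ 2 := by
      refine pow_le_pow_left₀ (norm_nonneg _) h1 2
    have h5 : (∑ j, ‖A i j‖ ^ 2) = ∑ j, normSq (A i j) :=
      Finset.sum_congr rfl fun j _ => by rw [normSq_eq_norm_mul_self, sq]
    have h6 : (∑ j, ‖x j‖ ^ 2) = n2 x :=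
      Finset.sum_congr rfl fun j _ => by rw [normSq_eq_norm_mul_self, sq]
    calc normSq ((A *ᵥ x) i) = ‖(A *ᵥ x) i‖ ^ 2 := h3
    _ ≤ (∑ j, ‖A i j‖ * ‖x j‖) ^ 2 := h4
    _ ≤ (∑ j, ‖A i j‖ ^ 2) * (∑ j, ‖x j‖ ^ 2) := h2
    _ = (∑ j, normSq (A i j)) * n2 x := by rw [h5, h6]
  calc qf A x = ∑ i, normSq ((A *ᵥ x) i) := rfl
  _ ≤ ∑ i, (∑ j, normSq (A i j)) * n2 x := Finset.sum_le_sum fun i _ => hterm i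
  _ = (∑ i, ∑ j, normSq (A i j)) * n2 x := by rw [← Finset.sum_mul]

lemma rectDiag_eq_rd {M N : ℕ} (σ : ℕ → ℝ) :
    rectDiag M N (fun i : Fin (min M N) => σ i) = rd M N σ := by
  refine Matrix.ext fun i j => ?_
  by_cases h : (i : ℕ) = (j : ℕ)
  · have hlt : (i : ℕ) < min M N := lt_min i.isLt (h ▸ j.isLt)
    rw [rectDiag, of_apply, dif_pos ⟨h, hlt⟩, rd, of_apply, if_pos h]
  · rw [rectDiag, of_apply, dif_neg (fun hc => h hc.1), rd, of_apply, if_neg h]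


end QSVDproof

/-- Every quaternion matrix admits a quaternion singular value decomposition. -/
theorem qsvd_exists {M N : ℕ} (A : Matrix (Fin M) (Fin N) ℍ) :
    ∃ (U : Matrix (Fin M) (Fin M) ℍ) (σ : Fin (min M N) → ℝ)
      (V : Matrix (Fin N) (Fin N) ℍ), IsQSVD A U σ V := by
  obtain ⟨U, V, σ, hU, hV, hdec, h0, _, hEq⟩ :=
    QSVDproof.aux (M + N) M N le_rfl A _ (Real.sqrt_nonneg _) (QSVDproof.crude_bound A)
  refine ⟨U, fun i => σ i, V, hU, hV, ?_, fun i => h0 i, ?_⟩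
  · have hanti : Antitone σ := antitone_nat_of_succ_le hdec
    intro i j hij
    exact hanti hij
  · rw [QSVDproof.rectDiag_eq_rd]
    exact hEq
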